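/- Let x : ℝ → ℝⁿ be a solution of the linear ODE ẋ(t) = A x(t) + B u₀ with constant input u₀ on [0, δ]. Then for any positive semidefinite matrices Q and R, ∫₀^δ (x(ξ)ᵀ Q x(ξ) + u₀ᵀ R u₀) dξ = [x(0); u₀]ᵀ Γ(δ) [x(0); u₀], where Γ(δ) is the block matrix with blocks ∫₀^δ A_sᵀ Q A_s ds, ∫₀^δ A_sᵀ Q B_s ds, ∫₀^δ B_sᵀ Q A_s ds, and ∫₀^δ (B_sᵀ Q B_s + R) ds, with A_s = e^{A s} and B_s = (∫₀^s e^{Aτ} dτ) B. -/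

import Mathlib

open Matrix MeasureTheory intervalIntegral

section LinftyFacts

attribute [local instance 2000] Matrix.linftyOpNormedRing Matrix.linftyOpNormedAlgebra

theorem expEntryDeriv {n : ℕ} (A : Matrix (Fin n) (Fin n) ℝ) (s : ℝ) (i j : Fin n) :
    HasDerivAt (fun t : ℝ => NormedSpace.exp (t • A) i j)
      ((A * NormedSpace.exp (s • A)) i j) s := by
  have h := hasDerivAt_exp_smul_const' (𝕂 := ℝ) A s
  let L : (Matrix (Fin n) (Fin n) ℝ) →L[ℝ] ℝ :=
    ⟨(LinearMap.proj (R:=ℝ) (φ := fun _ : Fin n => ℝ) j).comp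
        (LinearMap.proj (R:=ℝ) (φ := fun _ : Fin n => Fin n → ℝ) i),
      (continuous_apply j).comp (continuous_apply i)⟩
  exact L.hasFDerivAt.comp_hasDerivAt s h

theorem expZeroSmul {n : ℕ} (A : Matrix (Fin n) (Fin n) ℝ) :
    NormedSpace.exp ((0:ℝ) • A) = 1 := by
  rw [zero_smul, NormedSpace.exp_zero]

end LinftyFacts

attribute [local instance] Matrix.normedAddCommGroup Matrix.normedSpace

/-- `A_s = e^{As}`. -/
noncomputable def Aexp {n : ℕ} (A : Matrix (Fin n) (Fin n) ℝ) (s : ℝ) :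
    Matrix (Fin n) (Fin n) ℝ := NormedSpace.exp (s • A)

/-- `B_s = (∫₀^s e^{Aτ} dτ) B`. -/
noncomputable def Bexp {n m : ℕ} (A : Matrix (Fin n) (Fin n) ℝ)
    (B : Matrix (Fin n) (Fin m) ℝ) (s : ℝ) : Matrix (Fin n) (Fin m) ℝ :=
  (∫ τ in (0:ℝ)..s, Aexp A τ) * B

/-- The block matrix `Γ(δ)` of the stage-cost quadratic form. -/
noncomputable def Gam {n m : ℕ} (A : Matrix (Fin n) (Fin n) ℝ)
    (B : Matrix (Fin n) (Fin m) ℝ) (Q : Matrix (Fin n) (Fin n) ℝ)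
    (R : Matrix (Fin m) (Fin m) ℝ) (δ : ℝ) :
    Matrix (Fin n ⊕ Fin m) (Fin n ⊕ Fin m) ℝ :=
  Matrix.fromBlocks
    (∫ s in (0:ℝ)..δ, (Aexp A s)ᵀ * Q * Aexp A s)
    (∫ s in (0:ℝ)..δ, (Aexp A s)ᵀ * Q * Bexp A B s)
    (∫ s in (0:ℝ)..δ, (Bexp A B s)ᵀ * Q * Aexp A s)
    (∫ s in (0:ℝ)..δ, ((Bexp A B s)ᵀ * Q * Bexp A B s + R))

/-! ### Auxiliary continuous linear maps (Pi norm instances) -/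

/-- `M ↦ M *ᵥ v` as a continuous linear map. -/
noncomputable def mulVecCLM {n k : ℕ} (v : Fin k → ℝ) :
    Matrix (Fin n) (Fin k) ℝ →L[ℝ] (Fin n → ℝ) :=
  { toFun := fun M => M *ᵥ v
    map_add' := fun M N => Matrix.add_mulVec M N v
    map_smul' := fun c M => Matrix.smul_mulVec c M v
    cont := continuous_id.matrix_mulVec continuous_const }

/-- `M ↦ a ⬝ᵥ (M *ᵥ c)` as a continuous linear map. -/
noncomputable def quadCLM {n k : ℕ} (a : Fin n → ℝ) (c : Fin k → ℝ) :
    Matrix (Fin n) (Fin k) ℝ →L[ℝ] ℝ :=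
  { toFun := fun M => a ⬝ᵥ (M *ᵥ c)
    map_add' := fun M N => by
      simp [Matrix.add_mulVec, dotProduct_add]
    map_smul' := fun r M => by
      simp [Matrix.smul_mulVec, dotProduct_smul]
    cont := continuous_const.dotProduct (continuous_id.matrix_mulVec continuous_const) }

/-- `N ↦ M * N` as a continuous linear map. -/
noncomputable def lmulCLM {n k : ℕ} (M : Matrix (Fin n) (Fin n) ℝ) :
    Matrix (Fin n) (Fin k) ℝ →L[ℝ] Matrix (Fin n) (Fin k) ℝ :=
  { toFun := fun N => M * N
    map_add' := fun N₁ N₂ => Matrix.mul_add M N₁ N₂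
    map_smul' := fun c N => Matrix.mul_smul M c N
    cont := continuous_const.matrix_mul continuous_id }

/-- `N ↦ N * B` as a continuous linear map. -/
noncomputable def rmulCLM {n k : ℕ} (B : Matrix (Fin n) (Fin k) ℝ) :
    Matrix (Fin n) (Fin n) ℝ →L[ℝ] Matrix (Fin n) (Fin k) ℝ :=
  { toFun := fun N => N * B
    map_add' := fun N₁ N₂ => Matrix.add_mul N₁ N₂ B
    map_smul' := fun c N => Matrix.smul_mul c N B
    cont := continuous_id.matrix_mul continuous_const }

theorem hasDerivAt_Aexp {n : ℕ} (A : Matrix (Fin n) (Fin n) ℝ) (s : ℝ) :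
    HasDerivAt (Aexp A) (A * Aexp A s) s := by
  refine hasDerivAt_pi.2 fun i => ?_
  refine hasDerivAt_pi.2 fun j => ?_
  exact expEntryDeriv A s i j

theorem continuous_Aexp {n : ℕ} (A : Matrix (Fin n) (Fin n) ℝ) :
    Continuous (Aexp A) :=
  continuous_iff_continuousAt.2 fun s => (hasDerivAt_Aexp A s).continuousAt

theorem Aexp_zero {n : ℕ} (A : Matrix (Fin n) (Fin n) ℝ) : Aexp A 0 = 1 :=
  expZeroSmul A

theorem A_mul_integral_Aexp {n : ℕ} (A : Matrix (Fin n) (Fin n) ℝ) (s : ℝ) :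
    A * (∫ τ in (0:ℝ)..s, Aexp A τ) = Aexp A s - 1 := by
  have h1 : (∫ τ in (0:ℝ)..s, A * Aexp A τ) = Aexp A s - Aexp A 0 :=
    intervalIntegral.integral_eq_sub_of_hasDerivAt (fun t _ => hasDerivAt_Aexp A t)
      ((continuous_const.matrix_mul (continuous_Aexp A)).intervalIntegrable _ _)
  have h2 := (lmulCLM (k := n) A).intervalIntegral_comp_comm
    ((continuous_Aexp A).intervalIntegrable (μ := volume) 0 s)
  calc A * (∫ τ in (0:ℝ)..s, Aexp A τ) = ∫ τ in (0:ℝ)..s, A * Aexp A τ := h2.symm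
    _ = Aexp A s - 1 := by rw [h1, Aexp_zero]

theorem hasDerivAt_Bexp {n m : ℕ} (A : Matrix (Fin n) (Fin n) ℝ)
    (B : Matrix (Fin n) (Fin m) ℝ) (s : ℝ) :
    HasDerivAt (Bexp A B) (Aexp A s * B) s := by
  have h : HasDerivAt (fun u => ∫ τ in (0:ℝ)..u, Aexp A τ) (Aexp A s) s :=
    intervalIntegral.integral_hasDerivAt_right
      ((continuous_Aexp A).intervalIntegrable 0 s)
      (haveI : TopologicalSpace.PseudoMetrizableSpace (Matrix (Fin n) (Fin n) ℝ) :=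
        inferInstanceAs (TopologicalSpace.PseudoMetrizableSpace (Fin n → Fin n → ℝ))
       (continuous_Aexp A).stronglyMeasurableAtFilter _ _)
      (continuous_Aexp A).continuousAt
  exact (rmulCLM B).hasFDerivAt.comp_hasDerivAt s h

theorem continuous_Bexp {n m : ℕ} (A : Matrix (Fin n) (Fin n) ℝ)
    (B : Matrix (Fin n) (Fin m) ℝ) : Continuous (Bexp A B) :=
  continuous_iff_continuousAt.2 fun s => (hasDerivAt_Bexp A B s).continuousAt

theorem quadId {n k l : ℕ} (M : Matrix (Fin n) (Fin k) ℝ) (P : Matrix (Fin n) (Fin n) ℝ)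
    (N : Matrix (Fin n) (Fin l) ℝ) (v : Fin k → ℝ) (w : Fin l → ℝ) :
    v ⬝ᵥ ((Mᵀ * P * N) *ᵥ w) = (M *ᵥ v) ⬝ᵥ (P *ᵥ (N *ᵥ w)) := by
  calc v ⬝ᵥ ((Mᵀ * P * N) *ᵥ w) = v ⬝ᵥ (Mᵀ *ᵥ ((P * N) *ᵥ w)) := by
        rw [Matrix.mulVec_mulVec, Matrix.mul_assoc]
    _ = (v ᵥ* Mᵀ) ⬝ᵥ ((P * N) *ᵥ w) := Matrix.dotProduct_mulVec _ _ _
    _ = (M *ᵥ v) ⬝ᵥ (P *ᵥ (N *ᵥ w)) := by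
        rw [Matrix.vecMul_transpose, Matrix.mulVec_mulVec]

/-- Stage-cost identity: if `x` solves `ẋ = A x + B u₀` with constant input
`u₀` on `[0, δ]`, then for positive semidefinite `Q`, `R`,
`∫₀^δ (x(ξ)ᵀ Q x(ξ) + u₀ᵀ R u₀) dξ = [x(0); u₀]ᵀ Γ(δ) [x(0); u₀]`. -/
theorem stmt1 {n m : ℕ} (A : Matrix (Fin n) (Fin n) ℝ)
    (B : Matrix (Fin n) (Fin m) ℝ)
    (Q : Matrix (Fin n) (Fin n) ℝ) (R : Matrix (Fin m) (Fin m) ℝ)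
    (hQ : Q.PosSemidef) (hR : R.PosSemidef)
    (δ : ℝ) (hδ : 0 ≤ δ) (u₀ : Fin m → ℝ) (x : ℝ → Fin n → ℝ)
    (hode : ∀ t ∈ Set.Icc 0 δ,
      HasDerivAt x (A.mulVec (x t) + B.mulVec u₀) t) :
    (∫ ξ in (0:ℝ)..δ, (x ξ ⬝ᵥ Q.mulVec (x ξ) + u₀ ⬝ᵥ R.mulVec u₀)) =
      (Sum.elim (x 0) u₀) ⬝ᵥ (Gam A B Q R δ).mulVec (Sum.elim (x 0) u₀) := by
  set a : Fin n → ℝ := x 0 with ha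
  -- the candidate solution
  set y : ℝ → Fin n → ℝ := fun s => Aexp A s *ᵥ a + Bexp A B s *ᵥ u₀ with hy
  have hy0 : y 0 = x 0 := by
    simp [hy, ha, Bexp, Aexp_zero, intervalIntegral.integral_same, Matrix.zero_mul,
      Matrix.zero_mulVec, Matrix.one_mulVec]
  have hy' : ∀ s : ℝ, HasDerivAt y (A *ᵥ y s + B *ᵥ u₀) s := by
    intro s
    have h1 : HasDerivAt (fun s => Aexp A s *ᵥ a) ((A * Aexp A s) *ᵥ a) s :=
      (mulVecCLM a).hasFDerivAt.comp_hasDerivAt s (hasDerivAt_Aexp A s)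
    have h2 : HasDerivAt (fun s => Bexp A B s *ᵥ u₀) ((Aexp A s * B) *ᵥ u₀) s :=
      (mulVecCLM u₀).hasFDerivAt.comp_hasDerivAt s (hasDerivAt_Bexp A B s)
    have h3 := h1.add h2
    have key : (A * Aexp A s) *ᵥ a + (Aexp A s * B) *ᵥ u₀ = A *ᵥ y s + B *ᵥ u₀ := by
      have hAB : A * Bexp A B s = Aexp A s * B - B := by
        rw [Bexp, ← Matrix.mul_assoc, A_mul_integral_Aexp, Matrix.sub_mul, Matrix.one_mul]
      rw [hy]
      simp only [Matrix.mulVec_add, Matrix.mulVec_mulVec, hAB, Matrix.sub_mulVec]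
      abel
    rw [← key]
    exact h3
  -- uniqueness of the ODE solution
  have hsol : ∀ s ∈ Set.Icc (0:ℝ) δ, x s = y s := by
    have hAmv := (LinearMap.toContinuousLinearMap (Matrix.mulVecLin A)).lipschitz
    have hlip : ∀ t : ℝ, LipschitzWith ‖LinearMap.toContinuousLinearMap (Matrix.mulVecLin A)‖₊
        (fun z : Fin n → ℝ => A *ᵥ z + B *ᵥ u₀) := by
      intro t z w
      rw [edist_add_right]
      exact hAmv z w
    have := ODE_solution_unique (v := fun _ z => A *ᵥ z + B *ᵥ u₀) hlip
      (f := y) (g := x) (a := 0) (b := δ)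
      (fun t _ => (hy' t).continuousAt.continuousWithinAt)
      (fun t ht => ((hy' t).hasDerivWithinAt))
      (fun t ht => (hode t ht).continuousAt.continuousWithinAt)
      (fun t ht => ((hode t (Set.Ico_subset_Icc_self ht)).hasDerivWithinAt))
      hy0
    exact fun s hs => (this hs).symm
  -- pointwise expansion of the integrand
  have hpt : ∀ ξ ∈ Set.uIcc (0:ℝ) δ,
      x ξ ⬝ᵥ Q *ᵥ x ξ + u₀ ⬝ᵥ R *ᵥ u₀ =
        a ⬝ᵥ ((Aexp A ξ)ᵀ * Q * Aexp A ξ) *ᵥ a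
        + a ⬝ᵥ ((Aexp A ξ)ᵀ * Q * Bexp A B ξ) *ᵥ u₀
        + u₀ ⬝ᵥ ((Bexp A B ξ)ᵀ * Q * Aexp A ξ) *ᵥ a
        + u₀ ⬝ᵥ ((Bexp A B ξ)ᵀ * Q * Bexp A B ξ + R) *ᵥ u₀ := by
    intro ξ hξ
    rw [Set.uIcc_of_le hδ] at hξ
    rw [hsol ξ hξ, hy]
    simp only [Matrix.mulVec_add, dotProduct_add, add_dotProduct,
      Matrix.add_mulVec, quadId]
    ring
  rw [intervalIntegral.integral_congr hpt]
  -- continuity and integrability of the matrix integrands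
  have c11 : Continuous fun s => (Aexp A s)ᵀ * Q * Aexp A s :=
    ((continuous_Aexp A).matrix_transpose.matrix_mul continuous_const).matrix_mul
      (continuous_Aexp A)
  have c12 : Continuous fun s => (Aexp A s)ᵀ * Q * Bexp A B s :=
    ((continuous_Aexp A).matrix_transpose.matrix_mul continuous_const).matrix_mul
      (continuous_Bexp A B)
  have c21 : Continuous fun s => (Bexp A B s)ᵀ * Q * Aexp A s :=
    ((continuous_Bexp A B).matrix_transpose.matrix_mul continuous_const).matrix_mul
      (continuous_Aexp A)
  have c22 : Continuous fun s => (Bexp A B s)ᵀ * Q * Bexp A B s + R :=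
    (((continuous_Bexp A B).matrix_transpose.matrix_mul continuous_const).matrix_mul
      (continuous_Bexp A B)).add continuous_const
  -- expand the right-hand side
  rw [Gam, Matrix.fromBlocks_mulVec, sumElim_dotProduct_sumElim,
    dotProduct_add, dotProduct_add]
  simp only [Sum.elim_comp_inl, Sum.elim_comp_inr]
  have e11 := (quadCLM a a).intervalIntegral_comp_comm (c11.intervalIntegrable (μ := volume) 0 δ)
  have e12 := (quadCLM a u₀).intervalIntegral_comp_comm (c12.intervalIntegrable (μ := volume) 0 δ)
  have e21 := (quadCLM u₀ a).intervalIntegral_comp_comm (c21.intervalIntegrable (μ := volume) 0 δ)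
  have e22 := (quadCLM u₀ u₀).intervalIntegral_comp_comm (c22.intervalIntegrable (μ := volume) 0 δ)
  simp only [quadCLM, ContinuousLinearMap.coe_mk', LinearMap.coe_mk, AddHom.coe_mk] at e11 e12 e21 e22
  rw [← (show (∫ s in (0:ℝ)..δ, a ⬝ᵥ ((Aexp A s)ᵀ * Q * Aexp A s) *ᵥ a) = a ⬝ᵥ (∫ s in (0:ℝ)..δ, (Aexp A s)ᵀ * Q * Aexp A s) *ᵥ a from e11),
    ← (show (∫ s in (0:ℝ)..δ, a ⬝ᵥ ((Aexp A s)ᵀ * Q * Bexp A B s) *ᵥ u₀) = a ⬝ᵥ (∫ s in (0:ℝ)..δ, (Aexp A s)ᵀ * Q * Bexp A B s) *ᵥ u₀ from e12),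
    ← (show (∫ s in (0:ℝ)..δ, u₀ ⬝ᵥ ((Bexp A B s)ᵀ * Q * Aexp A s) *ᵥ a) = u₀ ⬝ᵥ (∫ s in (0:ℝ)..δ, (Bexp A B s)ᵀ * Q * Aexp A s) *ᵥ a from e21),
    ← (show (∫ s in (0:ℝ)..δ, u₀ ⬝ᵥ ((Bexp A B s)ᵀ * Q * Bexp A B s + R) *ᵥ u₀) = u₀ ⬝ᵥ (∫ s in (0:ℝ)..δ, (Bexp A B s)ᵀ * Q * Bexp A B s + R) *ᵥ u₀ from e22)]
  -- split the integral of the sum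
  have i11 : IntervalIntegrable (fun s => a ⬝ᵥ ((Aexp A s)ᵀ * Q * Aexp A s) *ᵥ a) volume 0 δ :=
    (continuous_const.dotProduct (c11.matrix_mulVec continuous_const)).intervalIntegrable _ _
  have i12 : IntervalIntegrable (fun s => a ⬝ᵥ ((Aexp A s)ᵀ * Q * Bexp A B s) *ᵥ u₀) volume 0 δ :=
    (continuous_const.dotProduct (c12.matrix_mulVec continuous_const)).intervalIntegrable _ _
  have i21 : IntervalIntegrable (fun s => u₀ ⬝ᵥ ((Bexp A B s)ᵀ * Q * Aexp A s) *ᵥ a) volume 0 δ :=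
    (continuous_const.dotProduct (c21.matrix_mulVec continuous_const)).intervalIntegrable _ _
  have i22 : IntervalIntegrable (fun s => u₀ ⬝ᵥ (((Bexp A B s)ᵀ * Q * Bexp A B s + R)) *ᵥ u₀) volume 0 δ :=
    (continuous_const.dotProduct (c22.matrix_mulVec continuous_const)).intervalIntegrable _ _
  rw [intervalIntegral.integral_add (((i11.add i12).add i21)) i22,
    intervalIntegral.integral_add ((i11.add i12)) i21,
    intervalIntegral.integral_add i11 i12]
  ring
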